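/- arXiv:2506.16864 — 2 statements merged into one kernel-verified Lean document; each statement's English description precedes it below -/
import Mathlib

section
/- Let k ≥ 1, let A and B be k-connected simple graphs, and let f : V(A) → V(B) be a function such that for every vertex a of A, the set {f(a') : a' a neighbour of a in A} has at least k elements. Then the Sierpiński product A ⊗_f B is k-connected. -/
/-- The Sierpiński product of simple graphs `A` and `B` with respect to `f : V(A) → V(B)`:
vertices are pairs `(a, b)`; two vertices are adjacent iff they lie in the same fibre and
their second coordinates are adjacent in `B`, or their first coordinates are adjacent in `A`
and the second coordinates are given by `f` applied to the other first coordinate. -/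
def SierpinskiProd {α β : Type*} (A : SimpleGraph α) (B : SimpleGraph β)
    (f : α → β) : SimpleGraph (α × β) where
  Adj p q := (p.1 = q.1 ∧ B.Adj p.2 q.2) ∨
    (A.Adj p.1 q.1 ∧ p.2 = f q.1 ∧ q.2 = f p.1)
  symm := ⟨by
    rintro ⟨a₁, b₁⟩ ⟨a₂, b₂⟩ (⟨h, hB⟩ | ⟨hA, h₁, h₂⟩)
    · exact Or.inl ⟨h.symm, hB.symm⟩
    · exact Or.inr ⟨hA.symm, h₂, h₁⟩⟩
  loopless := ⟨by
    rintro ⟨a, b⟩ (⟨_, hB⟩ | ⟨hA, _, _⟩)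
    · exact B.irrefl hB
    · exact A.irrefl hA⟩

/-- A vertex `v` of a graph `G` is a separating vertex if deleting `v` (taking the induced
subgraph on the remaining vertices) yields a graph that is not connected. -/
def IsSeparatingVertex {V : Type*} (G : SimpleGraph V) (v : V) : Prop :=
  ¬ (G.induce ({v}ᶜ : Set V)).Connected

/-- A graph `G` is `k`-connected if it has more than `k` vertices and deleting any set of
fewer than `k` vertices leaves a connected graph. -/
def KConnected {V : Type*} [Fintype V] (k : ℕ) (G : SimpleGraph V) : Prop :=
  k < Fintype.card V ∧ ∀ S : Set V, S.ncard < k → (G.induce Sᶜ).Connected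

/-- `W` is a cut-set of `G` if deleting all vertices of `W` strictly increases the number of
connected components. -/
def IsCutSet {V : Type*} (G : SimpleGraph V) (W : Set V) : Prop :=
  Nat.card G.ConnectedComponent < Nat.card (G.induce Wᶜ).ConnectedComponent

/-- `W` is a minimal cut-set of `G` if it is a cut-set and no proper subset is a cut-set. -/
def IsMinCutSet {V : Type*} (G : SimpleGraph V) (W : Set V) : Prop :=
  IsCutSet G W ∧ ∀ W' ⊂ W, ¬ IsCutSet G W'

/-- Reachability within a single fibre of the Sierpiński product. -/
lemma fib_reach {α β : Type*} (A : SimpleGraph α) (B : SimpleGraph β) (f : α → β)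
    {S : Set (α × β)} (a : α)
    (hcon : (B.induce ({b | (a, b) ∈ S}ᶜ : Set β)).Connected)
    {b₁ b₂ : β} (h₁ : (a, b₁) ∈ Sᶜ) (h₂ : (a, b₂) ∈ Sᶜ) :
    ((SierpinskiProd A B f).induce Sᶜ).Reachable ⟨(a, b₁), h₁⟩ ⟨(a, b₂), h₂⟩ := by
  let φ : (B.induce ({b | (a, b) ∈ S}ᶜ : Set β)) →g ((SierpinskiProd A B f).induce Sᶜ) :=
    { toFun := fun b => ⟨(a, b.1), b.2⟩,
      map_rel' := fun h => Or.inl ⟨rfl, h⟩ }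
  exact (hcon.preconnected ⟨b₁, h₁⟩ ⟨b₂, h₂⟩).map φ

/-- Reachability starting in untouched fibres, along a walk in `A.induce Tᶜ`. -/
lemma walk_reach {α β : Type*} (A : SimpleGraph α) (B : SimpleGraph β) (f : α → β)
    {S : Set (α × β)} {T : Set α}
    (hfib : ∀ a : α, (B.induce ({b | (a, b) ∈ S}ᶜ : Set β)).Connected)
    (hT : ∀ a ∉ T, ∀ b : β, (a, b) ∉ S) :
    ∀ {x y : ↥(Tᶜ : Set α)} (_ : (A.induce (Tᶜ : Set α)).Walk x y) (b₁ b₂ : β)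
      (h₁ : (x.1, b₁) ∈ Sᶜ) (h₂ : (y.1, b₂) ∈ Sᶜ),
      ((SierpinskiProd A B f).induce Sᶜ).Reachable ⟨(x.1, b₁), h₁⟩ ⟨(y.1, b₂), h₂⟩ := by
  intro x y w
  induction w with
  | nil =>
    intro b₁ b₂ h₁ h₂
    exact fib_reach A B f _ (hfib _) h₁ h₂
  | @cons u v z h w ih =>
    intro b₁ b₂ h₁ h₂
    have e1 : (u.1, f v.1) ∈ Sᶜ := hT u.1 u.2 _
    have e2 : (v.1, f u.1) ∈ Sᶜ := hT v.1 v.2 _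
    have hadj : ((SierpinskiProd A B f).induce Sᶜ).Adj ⟨(u.1, f v.1), e1⟩ ⟨(v.1, f u.1), e2⟩ :=
      Or.inr ⟨h, rfl, rfl⟩
    exact ((fib_reach A B f _ (hfib _) h₁ e1).trans hadj.reachable).trans (ih (f u.1) b₂ e2 h₂)

/-- The counting lemma: some neighbour of `a` gives an unbroken cross edge into an
untouched fibre. -/
lemma exists_good {α β : Type*} [Fintype α] [Fintype β]
    (A : SimpleGraph α) (f : α → β) {S : Set (α × β)} {k : ℕ}
    (hS : S.ncard < k) (hf : ∀ a : α, k ≤ (f '' A.neighborSet a).ncard) (a : α) :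
    ∃ a', A.Adj a a' ∧ a' ∉ Prod.fst '' S ∧ (a, f a') ∉ S := by
  classical
  by_contra hcon
  push_neg at hcon
  -- every value in f '' N(a) yields an element of S, injectively
  have hV : ∀ b' ∈ f '' A.neighborSet a,
      ∃ s ∈ S, s = (a, b') ∨ (s.1 ≠ a ∧ f s.1 = b') := by
    rintro b' ⟨a', ha', rfl⟩
    by_cases hT : a' ∈ Prod.fst '' S
    · obtain ⟨s, hs, hs1⟩ := hT
      exact ⟨s, hs, Or.inr ⟨by rw [hs1]; exact fun h => A.loopless.irrefl a (h ▸ ha'),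
        by rw [hs1]⟩⟩
    · exact ⟨(a, f a'), hcon a' ha' hT, Or.inl rfl⟩
  set V : Set β := f '' A.neighborSet a with hVdef
  let g : β → α × β := fun b' => if h : b' ∈ V then (hV b' h).choose else (a, b')
  have hg : ∀ b' ∈ V, g b' ∈ S ∧ ((g b') = (a, b') ∨ ((g b').1 ≠ a ∧ f (g b').1 = b')) := by
    intro b' hb'
    simp only [g, dif_pos hb']
    exact ⟨(hV b' hb').choose_spec.1, (hV b' hb').choose_spec.2⟩
  have hle : V.ncard ≤ S.ncard := by
    apply Set.ncard_le_ncard_of_injOn g (fun b' hb' => (hg b' hb').1) _ (Set.toFinite S)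
    intro b₁ hb₁ b₂ hb₂ heq
    rcases (hg b₁ hb₁).2 with h1 | h1 <;> rcases (hg b₂ hb₂).2 with h2 | h2
    · have := h1.symm.trans (heq.trans h2)
      exact (Prod.mk.injEq _ _ _ _ ▸ this).2
    · exact absurd (by rw [← heq, h1]) h2.1
    · exact absurd (by rw [heq, h2]) h1.1
    · rw [← h1.2, ← h2.2, heq]
  exact absurd (lt_of_lt_of_le (lt_of_le_of_lt hle hS) (hf a)) (lt_irrefl _)

/-- **Theorem.** If `A` and `B` are `k`-connected (`k ≥ 1`) and every vertex `a` of `A` has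
at least `k` distinct images of neighbours under `f`, then `A ⊗_f B` is `k`-connected. -/
theorem sierpinski_kConnected {α β : Type*} [Fintype α] [Fintype β]
    (k : ℕ) (hk : 1 ≤ k)
    (A : SimpleGraph α) (B : SimpleGraph β) (f : α → β)
    (hA : KConnected k A) (hB : KConnected k B)
    (hf : ∀ a : α, k ≤ (f '' A.neighborSet a).ncard) :
    KConnected k (SierpinskiProd A B f) := by
  classical
  constructor
  · calc k < Fintype.card α := hA.1
      _ ≤ Fintype.card α * Fintype.card β :=
          Nat.le_mul_of_pos_right _ (lt_of_le_of_lt (Nat.zero_le k) hB.1)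
      _ = Fintype.card (α × β) := (Fintype.card_prod α β).symm
  · intro S hS
    set T : Set α := Prod.fst '' S with hTdef
    have hTcard : T.ncard < k := lt_of_le_of_lt (Set.ncard_image_le (Set.toFinite S)) hS
    have hAcon : (A.induce (Tᶜ : Set α)).Connected := hA.2 T hTcard
    have hfib : ∀ a : α, (B.induce ({b | (a, b) ∈ S}ᶜ : Set β)).Connected := by
      intro a
      apply hB.2
      refine lt_of_le_of_lt ?_ hS
      apply Set.ncard_le_ncard_of_injOn (fun b => (a, b)) (fun b hb => hb)
        (fun b₁ _ b₂ _ h => (Prod.mk.injEq _ _ _ _ ▸ h).2) (Set.toFinite S)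
    have hTnot : ∀ a ∉ T, ∀ b : β, (a, b) ∉ S := fun a ha b hb => ha ⟨(a, b), hb, rfl⟩
    -- every remaining vertex reaches an untouched fibre
    have hout : ∀ (a : α) (b : β) (h : (a, b) ∈ Sᶜ),
        ∃ (a' : α) (ha' : a' ∈ (Tᶜ : Set α)) (h' : (a', f a) ∈ Sᶜ),
          ((SierpinskiProd A B f).induce Sᶜ).Reachable ⟨(a, b), h⟩ ⟨(a', f a), h'⟩ := by
      intro a b h
      obtain ⟨a', hadj, hT', hb'⟩ := exists_good A f hS hf a
      have e1 : (a, f a') ∈ Sᶜ := hb'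
      have e2 : (a', f a) ∈ Sᶜ := hTnot a' hT' _
      have step : ((SierpinskiProd A B f).induce Sᶜ).Adj ⟨(a, f a'), e1⟩ ⟨(a', f a), e2⟩ :=
        Or.inr ⟨hadj, rfl, rfl⟩
      exact ⟨a', hT', e2, (fib_reach A B f a (hfib a) h e1).trans step.reachable⟩
    rw [SimpleGraph.connected_iff]
    constructor
    · rintro ⟨⟨a₁, b₁⟩, hx⟩ ⟨⟨a₂, b₂⟩, hy⟩
      obtain ⟨a₁', hT₁, h₁, r₁⟩ := hout a₁ b₁ hx
      obtain ⟨a₂', hT₂, h₂, r₂⟩ := hout a₂ b₂ hy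
      refine r₁.trans (SimpleGraph.Reachable.trans ?_ r₂.symm)
      obtain ⟨w⟩ := hAcon.preconnected ⟨a₁', hT₁⟩ ⟨a₂', hT₂⟩
      exact walk_reach A B f hfib hTnot w (f a₁) (f a₂) h₁ h₂
    · obtain ⟨⟨a₀, ha₀⟩⟩ := hAcon.nonempty
      have : Nonempty β := Fintype.card_pos_iff.mp (lt_of_le_of_lt (Nat.zero_le k) hB.1)
      obtain ⟨b₀⟩ := this
      exact ⟨⟨(a₀, b₀), hTnot a₀ ha₀ b₀⟩⟩
end

section
/- Let A be a simple graph, let B be a graph with exactly two vertices which are adjacent (i.e. B is isomorphic to K₂), and let f : V(A) → V(B) be a function such that the Sierpiński product A ⊗_f B is 3-connected. Then every vertex of A has degree at least 4 in A. -/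
lemma isolated_eq {V : Type*} {G : SimpleGraph V} {v w : V}
    (h : ∀ u, ¬ G.Adj v u) (hr : G.Reachable v w) : v = w := by
  obtain ⟨p⟩ := hr
  cases p with
  | nil => rfl
  | cons h' _ => exact absurd h' (h _)

/-- **Lemma.** If `B` is the complete graph on two vertices and `A ⊗_f B` is `3`-connected,
then every vertex of `A` has degree at least `4`. -/
theorem sierpinski_K2_min_degree {α β : Type*} [Fintype α] [Fintype β]
    (A : SimpleGraph α) (B : SimpleGraph β)
    (hcard : Fintype.card β = 2) (hadj : ∀ x y : β, x ≠ y → B.Adj x y)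
    (f : α → β)
    (h3 : KConnected 3 (SierpinskiProd A B f)) :
    ∀ a : α, 4 ≤ (A.neighborSet a).ncard := by
  classical
  intro a
  by_contra hlt
  push_neg at hlt
  -- β has two elements
  obtain ⟨b₀, b₁, hb01, hbuniv⟩ := (Nat.card_eq_two_iff (α := β)).mp (by rw [Nat.card_eq_fintype_card, hcard])
  have hmem : ∀ x : β, x = b₀ ∨ x = b₁ := by
    intro x
    have : x ∈ ({b₀, b₁} : Set β) := hbuniv ▸ Set.mem_univ x
    simpa using this
  -- pigeonhole on neighbors of a
  set N := A.neighborFinset a with hN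
  have hNcard : N.card ≤ 3 := by
    have := Set.ncard_eq_toFinset_card' (A.neighborSet a)
    have h2 : (A.neighborSet a).toFinset.card = N.card := rfl
    omega
  have hsplit := Finset.card_filter_add_card_filter_not (s := N) (fun x => f x = b₀)
  -- choose b with few neighbors mapping to b
  obtain ⟨b, b', hbb', hNb⟩ :
      ∃ b b' : β, b ≠ b' ∧ (N.filter (fun x => f x = b)).card ≤ 1 := by
    by_cases h : (N.filter (fun x => f x = b₀)).card ≤ 1
    · exact ⟨b₀, b₁, hb01, h⟩
    · refine ⟨b₁, b₀, hb01.symm, ?_⟩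
      have hsub : N.filter (fun x => f x = b₁) ⊆ N.filter (fun x => ¬ f x = b₀) := by
        intro x hx
        simp only [Finset.mem_filter] at hx ⊢
        rcases hx with ⟨hx1, hx2⟩
        exact ⟨hx1, by rw [hx2]; exact hb01.symm⟩
      have := Finset.card_le_card hsub
      omega
  set Nb := N.filter (fun x => f x = b) with hNbdef
  set S : Set (α × β) := insert (a, b') ((fun c => (c, f a)) '' (Nb : Set α)) with hS
  have hScard : S.ncard ≤ 2 := by
    have h1 : ((fun c => (c, f a)) '' (Nb : Set α)).ncard ≤ 1 := by
      calc ((fun c => (c, f a)) '' (Nb : Set α)).ncard ≤ (Nb : Set α).ncard :=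
            Set.ncard_image_le (Set.toFinite _)
        _ ≤ 1 := by rw [Set.ncard_coe_finset]; exact hNb
    calc S.ncard ≤ ((fun c => (c, f a)) '' (Nb : Set α)).ncard + 1 := Set.ncard_insert_le _ _
      _ ≤ 2 := by omega
  have hconn := h3.2 S (by omega)
  -- (a, b) is not in S
  have habS : (a, b) ∉ S := by
    intro h
    rcases h with h | h
    · exact hbb' (congrArg Prod.snd h)
    · obtain ⟨c, hc, hce⟩ := h
      have hca : c = a := congrArg Prod.fst hce
      rw [hca] at hc
      have : A.Adj a a := by
        have := Finset.mem_filter.mp hc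
        exact (SimpleGraph.mem_neighborFinset _ _ _).mp this.1
      exact A.irrefl this
  -- (a, b) is isolated in the induced graph on Sᶜ
  have hiso : ∀ w : (α × β), w ∈ Sᶜ → ¬ (SierpinskiProd A B f).Adj (a, b) w := by
    rintro ⟨x, y⟩ hw hadj2
    rcases hadj2 with ⟨hx, hBy⟩ | ⟨hAx, hfb, hfy⟩
    · have hyb : y ≠ b := fun h => B.irrefl (h ▸ hBy).symm
      have hy : y = b' := by
        rcases hmem y with h0 | h0 <;> rcases hmem b with h1 | h1 <;>
          rcases hmem b' with h2 | h2 <;> simp_all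
      apply hw
      left
      simp at hx
      rw [hx, hy]
    · apply hw
      right
      refine ⟨x, ?_, Prod.ext_iff.mpr ⟨rfl, hfy.symm⟩⟩
      rw [Finset.mem_coe, hNbdef, Finset.mem_filter]
      exact ⟨(SimpleGraph.mem_neighborFinset _ _ _).mpr (by simpa using hAx), hfb.symm⟩
  -- there is another vertex in Sᶜ
  have hbig : 1 < (Sᶜ : Set (α × β)).ncard := by
    have := Set.ncard_add_ncard_compl S (Set.toFinite _) (Set.toFinite _)
    have hcardV : 3 < Nat.card (α × β) := by
      rw [Nat.card_eq_fintype_card]; exact h3.1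
    omega
  obtain ⟨w, hwS, hwne⟩ := Set.exists_ne_of_one_lt_ncard hbig (a, b)
  have hr := hconn.preconnected ⟨(a, b), habS⟩ ⟨w, hwS⟩
  have heq := isolated_eq (fun u hu => hiso u.val u.property hu) hr
  exact hwne (congrArg Subtype.val heq).symm
end
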